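/- Suppose a sequence of real numbers satisfies R_n = g(n)·f(n) where g(n) = Σ_{j∈J} c_j w_j^n for a finite index set J with c_j = ±1, nonzero complex numbers w_j having a unique index m with |w_m| > |w_j| for all j ≠ m, and f satisfies 1/n ≤ C·f(n) ≤ C for a constant C > 0 and lim_{n→∞} f(n)^{1/n} = 1, and R_n > 0 for all n. Then lim_{n→∞} R_n^{1/n} exists and equals |w_m|. -/

import Mathlib

open Filter Real

private lemma aux_const_rpow (a : ℝ) (ha : 0 < a) :
    Filter.Tendsto (fun n : ℕ => a ^ ((1:ℝ)/n)) Filter.atTop (nhds 1) := by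
  have h : Filter.Tendsto (fun n : ℕ => Real.log a * ((1:ℝ)/n)) Filter.atTop (nhds 0) := by
    simpa using tendsto_const_nhds.mul (tendsto_one_div_atTop_nhds_zero_nat (𝕜 := ℝ))
  have h2 := (Real.continuous_exp.tendsto 0).comp h
  simp only [Function.comp, Real.exp_zero] at h2
  exact h2.congr fun n => (Real.rpow_def_of_pos ha _).symm

private lemma aux_nat_rpow :
    Filter.Tendsto (fun n : ℕ => (n:ℝ) ^ ((1:ℝ)/n)) Filter.atTop (nhds 1) :=
  tendsto_rpow_div.comp tendsto_natCast_atTop_atTop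

theorem growth_rate_dominant_term (J : Type*) [Fintype J]
    (c : J → ℂ) (hc : ∀ j, c j = 1 ∨ c j = -1)
    (w : J → ℂ) (hw : ∀ j, w j ≠ 0) (m : J)
    (hm : ∀ j, j ≠ m → ‖w j‖ < ‖w m‖)
    (f : ℕ → ℝ) (C : ℝ) (hC : 0 < C)
    (hf : ∀ n : ℕ, 1 ≤ n → (1 : ℝ) / n ≤ C * f n ∧ C * f n ≤ C)
    (hflim : Filter.Tendsto (fun n : ℕ => f n ^ ((1 : ℝ) / n)) Filter.atTop (nhds 1))
    (R : ℕ → ℝ) (hRpos : ∀ n : ℕ, 1 ≤ n → 0 < R n)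
    (hR : ∀ n : ℕ, 1 ≤ n → (R n : ℂ) = (∑ j, c j * w j ^ n) * (f n : ℂ)) :
    Filter.Tendsto (fun n : ℕ => R n ^ ((1 : ℝ) / n)) Filter.atTop (nhds ‖w m‖) := by
  classical
  set M : ℝ := ‖w m‖ with hMdef
  have hM0 : 0 < M := norm_pos_iff.mpr (hw m)
  have hcard : 0 < (Fintype.card J : ℝ) := by
    have : 0 < Fintype.card J := Fintype.card_pos_iff.mpr ⟨m⟩
    exact_mod_cast this
  -- f positivity and bounds
  have hfpos : ∀ n : ℕ, 1 ≤ n → 0 < f n := by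
    intro n hn
    have h1 := (hf n hn).1
    have h2 : (0:ℝ) < 1/n := by positivity
    nlinarith
  have hf1 : ∀ n : ℕ, 1 ≤ n → f n ≤ 1 := by
    intro n hn
    have h2 := (hf n hn).2
    nlinarith
  have hflow : ∀ n : ℕ, 1 ≤ n → (1:ℝ)/(C*n) ≤ f n := by
    intro n hn
    have h1 := (hf n hn).1
    have hn0 : (0:ℝ) < n := by exact_mod_cast hn
    rw [div_le_iff₀ (by positivity)]
    calc (1:ℝ) = (1/n) * n := by field_simp
    _ ≤ (C * f n) * n := by nlinarith
    _ = f n * (C * n) := by ring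
  -- R n = ‖g n‖ * f n
  have hRnorm : ∀ n : ℕ, 1 ≤ n → R n = ‖∑ j, c j * w j ^ n‖ * f n := by
    intro n hn
    have h := congrArg norm (hR n hn)
    rw [norm_mul, Complex.norm_real, Complex.norm_real,
      Real.norm_of_nonneg (hRpos n hn).le, Real.norm_of_nonneg (hfpos n hn).le] at h
    exact h
  -- norms of c
  have hcn : ∀ j, ‖c j‖ = 1 := by
    intro j; rcases hc j with h | h <;> simp [h]
  -- eventual smallness of the subdominant sum
  have hsum0 : Filter.Tendsto
      (fun n : ℕ => ∑ j ∈ Finset.univ.erase m, (‖w j‖ / M) ^ n) Filter.atTop (nhds 0) := by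
    have := tendsto_finset_sum (Finset.univ.erase m)
      (fun j hj => tendsto_pow_atTop_nhds_zero_of_lt_one
        (div_nonneg (norm_nonneg _) hM0.le)
        ((div_lt_one hM0).mpr (hm j (Finset.ne_of_mem_erase hj))))
    simpa using this
  have hsmall : ∀ᶠ n : ℕ in Filter.atTop,
      ∑ j ∈ Finset.univ.erase m, ‖w j‖ ^ n ≤ (1/2) * M ^ n := by
    filter_upwards [hsum0.eventually_le_const (by norm_num : (0:ℝ) < 1/2)] with n hn
    have hMn : (0:ℝ) < M ^ n := by positivity
    have : (∑ j ∈ Finset.univ.erase m, ‖w j‖ ^ n) / M ^ n ≤ 1/2 := by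
      rw [Finset.sum_div]
      simpa [div_pow] using hn
    calc ∑ j ∈ Finset.univ.erase m, ‖w j‖ ^ n
        = ((∑ j ∈ Finset.univ.erase m, ‖w j‖ ^ n) / M ^ n) * M ^ n := by field_simp
    _ ≤ (1/2) * M ^ n := by nlinarith
  -- lower bound on ‖g n‖
  have hglow : ∀ᶠ n : ℕ in Filter.atTop,
      (1/2) * M ^ n ≤ ‖∑ j, c j * w j ^ n‖ := by
    filter_upwards [hsmall] with n hn
    have hsplit : (∑ j, c j * w j ^ n)
        = c m * w m ^ n + ∑ j ∈ Finset.univ.erase m, c j * w j ^ n := by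
      exact (Finset.add_sum_erase _ (fun j => c j * w j ^ n) (Finset.mem_univ m)).symm
    have h1 : ‖c m * w m ^ n‖ = M ^ n := by
      rw [norm_mul, hcn, norm_pow, one_mul]
    have h2 : ‖∑ j ∈ Finset.univ.erase m, c j * w j ^ n‖
        ≤ ∑ j ∈ Finset.univ.erase m, ‖w j‖ ^ n := by
      refine le_trans (norm_sum_le _ _) (le_of_eq ?_)
      exact Finset.sum_congr rfl fun j _ => by rw [norm_mul, hcn, norm_pow, one_mul]
    have h3 := norm_sub_norm_le (c m * w m ^ n)
      (-(∑ j ∈ Finset.univ.erase m, c j * w j ^ n))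
    rw [sub_neg_eq_add, norm_neg, ← hsplit, h1] at h3
    linarith
  -- upper bound on ‖g n‖
  have hgup : ∀ n : ℕ, ‖∑ j, c j * w j ^ n‖ ≤ (Fintype.card J : ℝ) * M ^ n := by
    intro n
    refine le_trans (norm_sum_le _ _) ?_
    calc ∑ j, ‖c j * w j ^ n‖ ≤ ∑ _j : J, M ^ n := by
          refine Finset.sum_le_sum fun j _ => ?_
          rw [norm_mul, hcn, norm_pow, one_mul]
          refine pow_le_pow_left₀ (norm_nonneg _) ?_ n
          rcases eq_or_ne j m with rfl | h
          · exact le_refl _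
          · exact (hm j h).le
    _ = (Fintype.card J : ℝ) * M ^ n := by
          simp [Finset.sum_const, nsmul_eq_mul]
  -- squeeze
  have hloTendsto : Filter.Tendsto
      (fun n : ℕ => M * ((2*C*n)⁻¹ ^ ((1:ℝ)/n))) Filter.atTop (nhds M) := by
    have haux : Filter.Tendsto (fun n : ℕ => (2*C*n) ^ ((1:ℝ)/n)) Filter.atTop (nhds 1) := by
      have h1 := (aux_const_rpow (2*C) (by positivity)).mul aux_nat_rpow
      rw [one_mul] at h1
      refine h1.congr' ?_
      filter_upwards [eventually_ge_atTop 1] with n hn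
      have hn0 : (0:ℝ) ≤ (n:ℝ) := by positivity
      rw [← Real.mul_rpow (by positivity) hn0, mul_assoc]
    have hinv : Filter.Tendsto (fun n : ℕ => ((2*C*n) ^ ((1:ℝ)/n))⁻¹)
        Filter.atTop (nhds 1) := by
      simpa using haux.inv₀ one_ne_zero
    have h2 : Filter.Tendsto (fun n : ℕ => M * ((2*C*n) ^ ((1:ℝ)/n))⁻¹)
        Filter.atTop (nhds (M * 1)) := tendsto_const_nhds.mul hinv
    rw [mul_one] at h2
    refine h2.congr fun n => ?_
    rw [← Real.inv_rpow (by positivity)]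
  have hhiTendsto : Filter.Tendsto
      (fun n : ℕ => M * ((Fintype.card J : ℝ) ^ ((1:ℝ)/n))) Filter.atTop (nhds M) := by
    have h2 := (tendsto_const_nhds (x := M)).mul (aux_const_rpow _ hcard)
    rw [mul_one] at h2
    exact h2
  refine tendsto_of_tendsto_of_tendsto_of_le_of_le' hloTendsto hhiTendsto ?_ ?_
  · -- lower bound
    filter_upwards [hglow, eventually_ge_atTop 1] with n hglown hn
    have hn0 : (0:ℝ) < n := by exact_mod_cast hn
    have hRlow : M ^ n * (2*C*n)⁻¹ ≤ R n := by
      rw [hRnorm n hn]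
      have hfl := hflow n hn
      calc M ^ n * (2*C*n)⁻¹ = ((1/2) * M ^ n) * (1/(C*n)) := by
            field_simp
      _ ≤ ‖∑ j, c j * w j ^ n‖ * f n := by
            have h1 : (0:ℝ) ≤ 1/(C*n) := by positivity
            have h2 : (0:ℝ) ≤ (1/2) * M ^ n := by positivity
            exact mul_le_mul hglown hfl h1 (le_trans h2 hglown)
    have hstep := Real.rpow_le_rpow (by positivity) hRlow (by positivity : (0:ℝ) ≤ 1/n)
    have heq : (M ^ n * (2*C*n)⁻¹) ^ ((1:ℝ)/n) = M * ((2*C*n)⁻¹ ^ ((1:ℝ)/n)) := by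
      rw [Real.mul_rpow (by positivity) (by positivity), ← Real.rpow_natCast M n,
        ← Real.rpow_mul hM0.le]
      congr 1
      field_simp
      simp
    rw [← heq]
    exact hstep
  · -- upper bound
    filter_upwards [eventually_ge_atTop 1] with n hn
    have hn0 : (0:ℝ) < n := by exact_mod_cast hn
    have hRup : R n ≤ (Fintype.card J : ℝ) * M ^ n := by
      rw [hRnorm n hn]
      calc ‖∑ j, c j * w j ^ n‖ * f n ≤ ((Fintype.card J : ℝ) * M ^ n) * 1 :=
            mul_le_mul (hgup n) (hf1 n hn) (hfpos n hn).le (by positivity)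
      _ = (Fintype.card J : ℝ) * M ^ n := mul_one _
    have hstep := Real.rpow_le_rpow (hRpos n hn).le hRup (by positivity : (0:ℝ) ≤ 1/n)
    have heq : ((Fintype.card J : ℝ) * M ^ n) ^ ((1:ℝ)/n)
        = M * ((Fintype.card J : ℝ) ^ ((1:ℝ)/n)) := by
      rw [Real.mul_rpow (by positivity) (by positivity), ← Real.rpow_natCast M n,
        ← Real.rpow_mul hM0.le, mul_comm]
      congr 1
      field_simp
      simp
    rw [heq] at hstep
    exact hstep
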